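/- Let A be an integral domain, P ∈ A[Y] monic of degree n ≥ 1, and p a positive divisor of n invertible in A. Let Q ∈ A[Y] be monic of degree n/p, let a₁ be the coefficient of Q^{p−1} in the Q-adic expansion of P, and let a₁' be the coefficient of τ_P(Q)^{p−1} in the τ_P(Q)-adic expansion of P. If a₁ ≠ 0, then deg a₁' ≤ deg a₁ − 1. -/

import Mathlib

open scoped Classical

/-- The coefficient `a_i` of `Q^(s-i)` in the `Q`-adic expansion
`P = a₀ Q^s + a₁ Q^(s-1) + ⋯ + a_s` of `P`, where `s = ⌊deg P / deg Q⌋`.  (When `Q` is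
monic of positive degree this expansion exists and is unique, so the choice below picks
out the actual expansion.) -/
noncomputable def adicCoeff {A : Type*} [CommRing A] (P Q : Polynomial A) (i : ℕ) :
    Polynomial A :=
  if h : ∃ a : ℕ → Polynomial A, (∀ j, (a j).degree < Q.degree) ∧
      P = ∑ j ∈ Finset.range (P.natDegree / Q.natDegree + 1),
        a j * Q ^ (P.natDegree / Q.natDegree - j)
  then h.choose i else 0

/-- The Tschirnhausen operator `τ_P (Q) = Q + (1/s) a₁`, where `a₁` is the coefficient of
`Q^(s-1)` in the `Q`-adic expansion of `P` and `s = deg P / deg Q`. -/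
noncomputable def tau {A : Type*} [CommRing A] (P Q : Polynomial A) : Polynomial A :=
  Q + Polynomial.C (Ring.inverse ((P.natDegree / Q.natDegree : ℕ) : A)) * adicCoeff P Q 1


section TschirnhausenAux
open Polynomial Finset
variable {A : Type*} [CommRing A] [IsDomain A]





lemma degree_lt_nat {r : Polynomial A} {N : ℕ} (h : r.natDegree < N) :
    r.degree < (N : WithBot ℕ) :=
  lt_of_le_of_lt degree_le_natDegree (by exact_mod_cast h)

lemma degree_pow_monic {Q : Polynomial A} (hQ : Q.Monic) (l : ℕ) :
    (Q ^ l).degree = ((l * Q.natDegree : ℕ) : WithBot ℕ) := by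
  rw [degree_eq_natDegree (hQ.pow l).ne_zero, hQ.natDegree_pow]

/-- coefficient of `Q^l` in the increasing-power `Q`-adic expansion -/
noncomputable def Ecoeff (Q P : Polynomial A) (l : ℕ) : Polynomial A := (P /ₘ Q ^ l) %ₘ Q

lemma Ecoeff_degree_lt (Q P : Polynomial A) (hQ : Q.Monic) (l : ℕ) :
    (Ecoeff Q P l).degree < Q.degree := degree_modByMonic_lt _ hQ

lemma Ecoeff_eq_zero {Q : Polynomial A} (hQ : Q.Monic) {P : Polynomial A} {l : ℕ}
    (h : P.degree < ((l * Q.natDegree : ℕ) : WithBot ℕ)) : Ecoeff Q P l = 0 := by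
  unfold Ecoeff
  rw [(divByMonic_eq_zero_iff (hQ.pow l)).2 (by rwa [degree_pow_monic hQ]), zero_modByMonic]

lemma divByMonic_pow_succ {Q : Polynomial A} (hQ : Q.Monic) (hm : 0 < Q.natDegree)
    (P : Polynomial A) (l : ℕ) : P /ₘ Q ^ (l + 1) = (P /ₘ Q) /ₘ Q ^ l := by
  have hdQ : Q.degree = (Q.natDegree : WithBot ℕ) := degree_eq_natDegree hQ.ne_zero
  refine (div_modByMonic_unique ((P /ₘ Q) /ₘ Q ^ l)
    (((P /ₘ Q) %ₘ Q ^ l) * Q + P %ₘ Q) (hQ.pow (l+1)) ⟨?_, ?_⟩).1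
  · have h1 := modByMonic_add_div P Q
    have h2 := modByMonic_add_div (P /ₘ Q) (Q ^ l)
    calc ((P /ₘ Q) %ₘ Q ^ l) * Q + P %ₘ Q + Q ^ (l+1) * ((P /ₘ Q) /ₘ Q ^ l)
        = P %ₘ Q + Q * ((P /ₘ Q) %ₘ Q ^ l + Q ^ l * ((P /ₘ Q) /ₘ Q ^ l)) := by ring
      _ = P := by rw [h2, h1]
  · rw [degree_pow_monic hQ]
    refine lt_of_le_of_lt (degree_add_le _ _) (max_lt ?_ ?_)
    · rcases eq_or_ne ((P /ₘ Q) %ₘ Q ^ l) 0 with h | h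
      · rw [h, zero_mul]
        exact degree_lt_nat (by positivity)
      · rw [degree_mul, hdQ]
        have hlt : ((P /ₘ Q) %ₘ Q ^ l).degree < ((l * Q.natDegree : ℕ) : WithBot ℕ) := by
          rw [← degree_pow_monic hQ]; exact degree_modByMonic_lt _ (hQ.pow l)
        rw [degree_eq_natDegree h] at hlt ⊢
        rw [← Nat.cast_add]
        have : ((P /ₘ Q) %ₘ Q ^ l).natDegree < l * Q.natDegree := by exact_mod_cast hlt
        have hr : (l + 1) * Q.natDegree = l * Q.natDegree + Q.natDegree := by ring
        exact_mod_cast (by omega : ((P /ₘ Q) %ₘ Q ^ l).natDegree + Q.natDegree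
            < (l + 1) * Q.natDegree)
    · refine lt_of_lt_of_le (degree_modByMonic_lt _ hQ) ?_
      rw [hdQ]
      exact_mod_cast Nat.le_mul_of_pos_left _ (Nat.succ_pos l)

lemma expand {Q : Polynomial A} (hQ : Q.Monic) (hm : 0 < Q.natDegree) :
    ∀ (s : ℕ) (P : Polynomial A), P.degree < (((s + 1) * Q.natDegree : ℕ) : WithBot ℕ) →
      P = ∑ l ∈ Finset.range (s + 1), Ecoeff Q P l * Q ^ l := by
  intro s
  induction s with
  | zero =>
    intro P hP
    simp only [zero_add, Finset.range_one, Finset.sum_singleton, pow_zero, mul_one]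
    unfold Ecoeff
    rw [pow_zero, divByMonic_one, (modByMonic_eq_self_iff hQ).2]
    rwa [degree_eq_natDegree hQ.ne_zero, ← one_mul Q.natDegree]
  | succ s ih =>
    intro P hP
    have hdiv : (P /ₘ Q).degree < (((s + 1) * Q.natDegree : ℕ) : WithBot ℕ) := by
      rcases eq_or_ne (P /ₘ Q) 0 with h | h
      · rw [h]; exact degree_lt_nat (by positivity)
      · have hP0 : P ≠ 0 := fun hc => h (by rw [hc, zero_divByMonic])
        have : P.natDegree < (s + 2) * Q.natDegree := by
          rw [degree_eq_natDegree hP0] at hP; exact_mod_cast hP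
        apply degree_lt_nat
        rw [natDegree_divByMonic _ hQ]
        have hr : (s + 2) * Q.natDegree = (s + 1) * Q.natDegree + Q.natDegree := by ring
        have hc : 0 < (s + 1) * Q.natDegree := by positivity
        omega
    have hstep := modByMonic_add_div P Q
    have hIH := ih (P /ₘ Q) hdiv
    calc P = P %ₘ Q + Q * (P /ₘ Q) := hstep.symm
      _ = Ecoeff Q P 0 * Q ^ 0 +
            ∑ l ∈ Finset.range (s + 1), Ecoeff Q P (l + 1) * Q ^ (l + 1) := by
          rw [hIH, Finset.mul_sum]
          congr 1
          · unfold Ecoeff; rw [pow_zero, divByMonic_one, mul_one]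
          · refine Finset.sum_congr rfl fun l _ => ?_
            have he : Ecoeff Q P (l + 1) = Ecoeff Q (P /ₘ Q) l := by
              unfold Ecoeff; rw [divByMonic_pow_succ hQ hm P l]
            rw [he, pow_succ]
            ring
      _ = ∑ l ∈ Finset.range (s + 2), Ecoeff Q P l * Q ^ l := by
          rw [Finset.sum_range_succ' (fun l => Ecoeff Q P l * Q ^ l) (s + 1)]
          ring






lemma uniq {Q : Polynomial A} (hQ : Q.Monic) (hm : 0 < Q.natDegree) :
    ∀ (s : ℕ) (e : ℕ → Polynomial A), (∀ l, (e l).degree < Q.degree) →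
      ∑ l ∈ Finset.range (s + 1), e l * Q ^ l = 0 → ∀ l ≤ s, e l = 0 := by
  intro s
  induction s with
  | zero =>
    intro e hdeg hsum l hl
    interval_cases l
    simpa using hsum
  | succ s ih =>
    intro e hdeg hsum l hl
    rw [Finset.sum_range_succ' (fun l => e l * Q ^ l) (s + 1)] at hsum
    have hfac : (∑ l ∈ Finset.range (s + 1), e (l + 1) * Q ^ l) * Q + e 0 = 0 := by
      rw [← hsum, Finset.sum_mul]
      simp [pow_succ, pow_zero, mul_assoc]
    have he0 : e 0 = 0 := by
      have := congrArg (· %ₘ Q) hfac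
      simpa [add_modByMonic, (modByMonic_eq_self_iff hQ).2 (hdeg 0),
        mul_comm, self_mul_modByMonic hQ] using this
    have hS : (∑ l ∈ Finset.range (s + 1), e (l + 1) * Q ^ l) = 0 := by
      rw [he0, add_zero] at hfac
      rcases mul_eq_zero.1 hfac with h | h
      · exact h
      · exact absurd h hQ.ne_zero
    have := ih (fun l => e (l + 1)) (fun l => hdeg (l + 1)) hS
    rcases Nat.eq_zero_or_pos l with h | h
    · rw [h]; exact he0
    · obtain ⟨k, rfl⟩ := Nat.exists_eq_succ_of_ne_zero h.ne'
      exact this k (by omega)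




/-- reflect a decreasing-power sum into increasing powers -/
lemma reflect_sum (s : ℕ) (c : ℕ → Polynomial A) (Q : Polynomial A) :
    ∑ j ∈ Finset.range (s + 1), c j * Q ^ (s - j)
      = ∑ l ∈ Finset.range (s + 1), c (s - l) * Q ^ l := by
  rw [← Finset.sum_range_reflect (fun l => c (s - l) * Q ^ l) (s + 1)]
  refine Finset.sum_congr rfl fun j hj => ?_
  rw [Finset.mem_range] at hj
  congr 2 <;> omega

lemma adicCoeff_eq {P Q : Polynomial A} (hQ : Q.Monic) (hm : 0 < Q.natDegree)
    (b : ℕ → Polynomial A) (hb : ∀ j, (b j).degree < Q.degree)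
    (hsum : P = ∑ j ∈ Finset.range (P.natDegree / Q.natDegree + 1),
        b j * Q ^ (P.natDegree / Q.natDegree - j))
    (i : ℕ) (hi : i ≤ P.natDegree / Q.natDegree) : adicCoeff P Q i = b i := by
  have hex : ∃ a : ℕ → Polynomial A, (∀ j, (a j).degree < Q.degree) ∧
      P = ∑ j ∈ Finset.range (P.natDegree / Q.natDegree + 1),
        a j * Q ^ (P.natDegree / Q.natDegree - j) := ⟨b, hb, hsum⟩
  have hval : ∀ i, adicCoeff P Q i = hex.choose i := fun i => by
    rw [adicCoeff, dif_pos hex]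
  obtain ⟨hdeg, hsum'⟩ := hex.choose_spec
  set s := P.natDegree / Q.natDegree with hs
  set a := hex.choose with ha
  have hzero : ∑ l ∈ Finset.range (s + 1), (a (s - l) - b (s - l)) * Q ^ l = 0 := by
    have : ∑ j ∈ Finset.range (s + 1), (a j - b j) * Q ^ (s - j) = 0 := by
      have := hsum'.symm.trans hsum
      calc ∑ j ∈ Finset.range (s + 1), (a j - b j) * Q ^ (s - j)
          = ∑ j ∈ Finset.range (s + 1), a j * Q ^ (s - j)
            - ∑ j ∈ Finset.range (s + 1), b j * Q ^ (s - j) := by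
            rw [← Finset.sum_sub_distrib]; exact Finset.sum_congr rfl fun j _ => by ring
        _ = 0 := by rw [← hsum', ← hsum]; ring
    rwa [reflect_sum s (fun j => a j - b j) Q] at this
  have huniq := uniq hQ hm s (fun l => a (s - l) - b (s - l))
    (fun l => lt_of_le_of_lt (degree_sub_le _ _) (max_lt (hdeg _) (hb _))) hzero
  have h2 := huniq (s - i) (by omega)
  rw [(by omega : s - (s - i) = i)] at h2
  rw [hval i]
  exact sub_eq_zero.1 h2






lemma bot_lt_natCast (N : ℕ) : (⊥ : WithBot ℕ) < (N : WithBot ℕ) := by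
  exact_mod_cast WithBot.bot_lt_coe N

/-- `v` admits a decomposition `(τ * H + g) * τ^e + R` with `g` of degree less than that
of `a1` and `R` of degree `< N`. -/
def GoodAux (τ a1 : Polynomial A) (e N : ℕ) (v : Polynomial A) : Prop :=
  ∃ H g R : Polynomial A, v = (τ * H + g) * τ ^ e + R ∧ g.degree < a1.degree ∧
    R.degree < (N : WithBot ℕ)

namespace GoodAux

variable {τ a1 : Polynomial A} {e N : ℕ}

lemma zero (ha1 : a1 ≠ 0) : GoodAux τ a1 e N 0 :=
  ⟨0, 0, 0, by ring, by
    simpa [degree_eq_bot] using (bot_lt_iff_ne_bot.2 (by simp [degree_eq_bot, ha1] : a1.degree ≠ ⊥)),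
    by simpa using bot_lt_natCast N⟩

lemma add {v w : Polynomial A} (hv : GoodAux τ a1 e N v) (hw : GoodAux τ a1 e N w) :
    GoodAux τ a1 e N (v + w) := by
  obtain ⟨H, g, R, h1, h2, h3⟩ := hv
  obtain ⟨H', g', R', h1', h2', h3'⟩ := hw
  exact ⟨H + H', g + g', R + R', by rw [h1, h1']; ring,
    lt_of_le_of_lt (degree_add_le _ _) (max_lt h2 h2'),
    lt_of_le_of_lt (degree_add_le _ _) (max_lt h3 h3')⟩

lemma sum (ha1 : a1 ≠ 0) {ι : Type*} (s : Finset ι) (f : ι → Polynomial A)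
    (h : ∀ i ∈ s, GoodAux τ a1 e N (f i)) : GoodAux τ a1 e N (∑ i ∈ s, f i) :=
  Finset.sum_induction f _ (fun _ _ => add) (zero ha1) h

lemma ofR (ha1 : a1 ≠ 0) {v : Polynomial A} (h : v.degree < (N : WithBot ℕ)) :
    GoodAux τ a1 e N v :=
  ⟨0, 0, v, by ring, by
    simpa [degree_eq_bot] using (bot_lt_iff_ne_bot.2 (by simp [degree_eq_bot, ha1] : a1.degree ≠ ⊥)),
    h⟩

lemma top (ha1 : a1 ≠ 0) (w : Polynomial A) : GoodAux τ a1 e N (w * τ ^ (e + 1)) :=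
  ⟨w, 0, 0, by rw [pow_succ]; ring, by
    simpa [degree_eq_bot] using (bot_lt_iff_ne_bot.2 (by simp [degree_eq_bot, ha1] : a1.degree ≠ ⊥)),
    by simpa using bot_lt_natCast N⟩


lemma intro {v H g R : Polynomial A} (h1 : v = (τ * H + g) * τ ^ e + R)
    (h2 : g.degree < a1.degree) (h3 : R.degree < (N : WithBot ℕ)) : GoodAux τ a1 e N v :=
  ⟨H, g, R, h1, h2, h3⟩

end GoodAux

lemma good_term {τ a1 : Polynomial A} (hτ : τ.Monic) (hm : 0 < τ.natDegree)
    (ha1 : a1 ≠ 0) (hd : a1.natDegree < τ.natDegree) (p' k : ℕ) (hk : k + 1 ≤ p')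
    (u : Polynomial A)
    (hu : u.degree < (((k + 1) * τ.natDegree + a1.natDegree : ℕ) : WithBot ℕ)) :
    GoodAux τ a1 p' (p' * τ.natDegree) (u * τ ^ (p' - 1 - k)) := by
  have hτ1 : τ ≠ 1 := fun h => by simp [h] at hm
  set m := τ.natDegree with hmdef
  set d := a1.natDegree with hddef
  have habot : a1.degree = (d : WithBot ℕ) := degree_eq_natDegree ha1
  have hu2 : u.degree < (((k + 1 + 1) * m : ℕ) : WithBot ℕ) := by
    refine lt_trans hu ?_
    exact_mod_cast (by nlinarith [hd, hm] : (k + 1) * m + d < (k + 1 + 1) * m)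
  have hexp := expand hτ hm (k + 1) u hu2
  have key : u * τ ^ (p' - 1 - k) =
      (∑ l ∈ Finset.range (k + 1), Ecoeff τ u l * τ ^ l * τ ^ (p' - 1 - k))
        + Ecoeff τ u (k + 1) * τ ^ p' := by
    conv_lhs => rw [hexp]
    rw [Finset.sum_range_succ, add_mul, Finset.sum_mul]
    congr 1
    rw [mul_assoc, ← pow_add]
    congr 2
    omega
  rw [key]
  refine GoodAux.add (GoodAux.ofR ha1 ?_) (GoodAux.intro (H := 0) (R := 0)
      (by ring) ?_ (by rw [degree_zero]; exact bot_lt_natCast _))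
  · refine lt_of_le_of_lt (degree_sum_le _ _)
      ((Finset.sup_lt_iff (bot_lt_natCast _)).2 fun l hl => ?_)
    rw [Finset.mem_range] at hl
    apply degree_lt_nat
    have h1 : (Ecoeff τ u l).natDegree < m := natDegree_modByMonic_lt _ hτ hτ1
    obtain ⟨q, hq⟩ : ∃ q, p' = q + k + 1 := ⟨p' - k - 1, by omega⟩
    have h2 : p' - 1 - k = q := by omega
    calc (Ecoeff τ u l * τ ^ l * τ ^ (p' - 1 - k)).natDegree
        ≤ (Ecoeff τ u l * τ ^ l).natDegree + (τ ^ (p' - 1 - k)).natDegree :=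
          natDegree_mul_le
      _ ≤ (Ecoeff τ u l).natDegree + (τ ^ l).natDegree + (τ ^ (p' - 1 - k)).natDegree := by
          exact Nat.add_le_add_right natDegree_mul_le _
      _ = (Ecoeff τ u l).natDegree + l * m + q * m := by
          rw [hτ.natDegree_pow, hτ.natDegree_pow, h2]
      _ < p' * m := by subst hq; nlinarith [h1, hl, hm]
  · -- degree of Ecoeff τ u (k+1) < degree a1
    set v := u /ₘ τ ^ (k + 1) with hv
    have hE : Ecoeff τ u (k + 1) = v %ₘ τ := rfl
    rcases eq_or_ne v 0 with h | h
    · rw [hE, h, zero_modByMonic]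
      rw [degree_zero, habot]
      exact bot_lt_natCast d
    · have hu0 : u ≠ 0 := by
        rintro rfl
        rw [hv, zero_divByMonic] at h
        exact h rfl
      have hund : u.natDegree < (k + 1) * m + d := by
        rw [degree_eq_natDegree hu0] at hu
        exact_mod_cast hu
      have hvd : v.natDegree = u.natDegree - (k + 1) * m := by
        rw [hv, natDegree_divByMonic _ (hτ.pow (k + 1)), hτ.natDegree_pow]
      have hge : (k + 1) * m ≤ u.natDegree := by
        by_contra hlt
        apply h
        rw [hv, divByMonic_eq_zero_iff (hτ.pow (k + 1)), degree_pow_monic hτ, ← hmdef]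
        exact degree_lt_nat (by omega)
      have hvlt : v.natDegree < d := by omega
      have hvdeg : v.degree < τ.degree := by
        rw [degree_eq_natDegree hτ.ne_zero]
        exact degree_lt_nat (by omega)
      rw [hE, (modByMonic_eq_self_iff hτ).2 hvdeg, degree_eq_natDegree h, habot]
      exact_mod_cast hvlt


end TschirnhausenAux

open Polynomial Finset

set_option maxHeartbeats 2000000 in
/-- **The Tschirnhausen operator strictly decreases the degree of `a₁`.**
Let `P` be monic of degree `n ≥ 1`, `p` a positive divisor of `n` invertible in `A`, and
`Q` monic of degree `n / p`.  Let `a₁` be the coefficient of `Q^(p-1)` in the `Q`-adic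
expansion of `P`, and `a₁'` the coefficient of `τ_P(Q)^(p-1)` in the `τ_P(Q)`-adic
expansion of `P`.  If `a₁ ≠ 0` then `deg a₁' ≤ deg a₁ - 1` (with `deg 0 = -∞`, this is
`deg a₁' < deg a₁`). -/
theorem stmt_6 {A : Type*} [CommRing A] [IsDomain A] (P : Polynomial A) (n p : ℕ)
    (hP : P.Monic) (hdeg : P.natDegree = n) (hn : 1 ≤ n) (hp : 0 < p) (hdvd : p ∣ n)
    (hinv : IsUnit (p : A)) (Q : Polynomial A) (hQ : Q.Monic) (hQdeg : Q.natDegree = n / p)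
    (ha1 : adicCoeff P Q 1 ≠ 0) :
    (adicCoeff P (tau P Q) 1).degree < (adicCoeff P Q 1).degree := by
  obtain ⟨p', rfl⟩ : ∃ p', p = p' + 1 := ⟨p - 1, by omega⟩
  set m := Q.natDegree with hmdef
  have hm : 0 < m := by
    rw [hQdeg]
    exact Nat.div_pos (Nat.le_of_dvd hn hdvd) hp
  have hQ1 : Q ≠ 1 := by
    intro h
    have h0 : m = 0 := by rw [hmdef, h, natDegree_one]
    omega
  have hnm : n = (p' + 1) * m := by
    rw [hQdeg]
    exact (Nat.mul_div_cancel' hdvd).symm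
  have hPdeg : P.natDegree = (p' + 1) * m := by rw [hdeg, hnm]
  have hsQ : P.natDegree / Q.natDegree = p' + 1 := by
    rw [hPdeg, ← hmdef]
    exact Nat.mul_div_cancel _ hm
  have hPdlt : P.degree < (((p' + 1 + 1) * m : ℕ) : WithBot ℕ) :=
    degree_lt_nat (by rw [hPdeg]; nlinarith [hm])
  -- Q-adic expansion of P
  set aQ : ℕ → Polynomial A := fun j => Ecoeff Q P (p' + 1 - j) with haQdef
  have hPQ : P = ∑ j ∈ Finset.range (p' + 1 + 1), aQ j * Q ^ (p' + 1 - j) := by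
    rw [reflect_sum (p' + 1) aQ Q]
    calc P = ∑ l ∈ Finset.range (p' + 1 + 1), Ecoeff Q P l * Q ^ l := expand hQ hm (p' + 1) P hPdlt
      _ = ∑ l ∈ Finset.range (p' + 1 + 1), aQ (p' + 1 - l) * Q ^ l := by
          refine Finset.sum_congr rfl fun l hl => ?_
          rw [Finset.mem_range] at hl
          rw [haQdef]
          simp only
          rw [(by omega : p' + 1 - (p' + 1 - l) = l)]
  have hdegaQ : ∀ j, (aQ j).degree < Q.degree := fun j => Ecoeff_degree_lt Q P hQ _
  have hadic : ∀ i ≤ p' + 1, adicCoeff P Q i = aQ i := fun i hi =>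
    adicCoeff_eq hQ hm aQ hdegaQ (by rw [hsQ]; exact hPQ) i (by rw [hsQ]; omega)
  set a1 : Polynomial A := adicCoeff P Q 1 with ha1def
  have ha1Q : a1 = aQ 1 := hadic 1 (by omega)
  have hd : a1.degree < Q.degree := ha1Q ▸ hdegaQ 1
  have hdm : a1.natDegree < m := by
    rw [degree_eq_natDegree ha1, degree_eq_natDegree hQ.ne_zero, ← hmdef] at hd
    exact_mod_cast hd
  set d := a1.natDegree with hddef
  -- leading coefficient of the expansion is 1
  have haQ0 : aQ 0 = 1 := by
    have hdivP : P /ₘ Q ^ (p' + 1) = 1 := by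
      refine (div_modByMonic_unique 1 (P - Q ^ (p' + 1)) (hQ.pow _) ⟨by ring, ?_⟩).1
      have h1 : degree P = degree (Q ^ (p' + 1)) := by
        rw [degree_pow_monic hQ, ← hmdef, degree_eq_natDegree hP.ne_zero, hPdeg]
      have h2 := degree_sub_lt h1 hP.ne_zero
        (by rw [hP.leadingCoeff, (hQ.pow _).leadingCoeff])
      exact h1 ▸ h2
    have : aQ 0 = Ecoeff Q P (p' + 1) := by simp [haQdef]
    rw [this, Ecoeff, hdivP]
    refine (modByMonic_eq_self_iff hQ).2 ?_
    rw [degree_one, degree_eq_natDegree hQ.ne_zero, ← hmdef]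
    exact_mod_cast hm
  -- the Tschirnhausen transform
  set c : A := Ring.inverse ((p' + 1 : ℕ) : A) with hcdef
  set B : Polynomial A := Polynomial.C c * a1 with hBdef
  set τ : Polynomial A := tau P Q with hτdef
  have hτeq : τ = Q + B := by rw [hτdef, tau, hsQ, ← ha1def, ← hcdef, ← hBdef]
  have hBle : B.degree ≤ a1.degree := by
    calc B.degree ≤ (Polynomial.C c).degree + a1.degree := degree_mul_le _ _
      _ ≤ 0 + a1.degree := add_le_add_left degree_C_le _
      _ = a1.degree := zero_add _
  have hBdeg : B.degree < Q.degree := lt_of_le_of_lt hBle hd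
  have hτmonic : τ.Monic := by rw [hτeq]; exact hQ.add_of_left hBdeg
  have hτdegQ : τ.degree = Q.degree := by
    rw [hτeq]; exact degree_add_eq_left_of_degree_lt hBdeg
  have hτm : τ.natDegree = m := natDegree_eq_of_degree_eq hτdegQ
  have hm' : 0 < τ.natDegree := by rw [hτm]; exact hm
  have hτ1 : τ ≠ 1 := fun h => by rw [h, natDegree_one] at hm'; omega
  have hsτ : P.natDegree / τ.natDegree = p' + 1 := by
    rw [hPdeg, hτm]
    exact Nat.mul_div_cancel _ hm
  have hdτ : a1.natDegree < τ.natDegree := by rw [hτm]; exact hdm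
  -- cancellation
  have hc1 : ((p' + 1 : ℕ) : A) * c = 1 := Ring.mul_inverse_cancel _ hinv
  have hpB : ((p' + 1 : ℕ) : Polynomial A) * B = a1 := by
    rw [hBdef, ← Polynomial.C_eq_natCast, ← mul_assoc, ← Polynomial.C_mul, hc1,
      Polynomial.C_1, one_mul]
  have hQτ : Q = -B + τ := by rw [hτeq]; ring
  have hsplit : ∀ f : ℕ → Polynomial A, ∑ j ∈ Finset.range (p' + 1 + 1), f j
      = f 0 + f 1 + ∑ j ∈ Finset.range p', f (j + 2) := by
    intro f
    rw [Finset.sum_range_succ' f (p' + 1), Finset.sum_range_succ' (fun j => f (j + 1)) p']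
    ring
  have hQp : Q ^ (p' + 1) = τ ^ (p' + 1)
      + (-B) * τ ^ p' * (((p' + 1).choose 1 : ℕ) : Polynomial A)
      + ∑ i ∈ Finset.range p',
          (-B) ^ (i + 2) * τ ^ (p' + 1 - (i + 2)) * (((p' + 1).choose (i + 2) : ℕ) : Polynomial A) := by
    rw [hQτ, add_pow, hsplit]
    simp only [pow_zero, one_mul, Nat.choose_zero_right, Nat.cast_one, mul_one, Nat.sub_zero,
      pow_one, Nat.add_sub_cancel]
    try ring
  have ha1Qp : a1 * Q ^ p' = a1 * τ ^ p'
      + ∑ i ∈ Finset.range p',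
          a1 * ((-B) ^ (i + 1) * τ ^ (p' - (i + 1)) * ((p'.choose (i + 1) : ℕ) : Polynomial A)) := by
    rw [hQτ, add_pow, Finset.sum_range_succ' (fun k =>
      (-B) ^ k * τ ^ (p' - k) * ((p'.choose k : ℕ) : Polynomial A)) p', mul_add, Finset.mul_sum]
    simp only [pow_zero, one_mul, Nat.choose_zero_right, Nat.cast_one, mul_one, Nat.sub_zero]
    ring
  have hmid : (-B) * τ ^ p' * (((p' + 1).choose 1 : ℕ) : Polynomial A) + a1 * τ ^ p' = 0 := by
    rw [Nat.choose_one_right]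
    linear_combination (-(τ ^ p')) * hpB
  have hP3 : P = τ ^ (p' + 1)
      + ((∑ i ∈ Finset.range p',
          (-B) ^ (i + 2) * τ ^ (p' + 1 - (i + 2)) * (((p' + 1).choose (i + 2) : ℕ) : Polynomial A))
        + ((∑ i ∈ Finset.range p',
          a1 * ((-B) ^ (i + 1) * τ ^ (p' - (i + 1)) * ((p'.choose (i + 1) : ℕ) : Polynomial A)))
        + ∑ j ∈ Finset.range p', aQ (j + 2) * Q ^ (p' + 1 - (j + 2)))) := by
    calc P = ∑ j ∈ Finset.range (p' + 1 + 1), aQ j * Q ^ (p' + 1 - j) := hPQ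
      _ = aQ 0 * Q ^ (p' + 1 - 0) + aQ 1 * Q ^ (p' + 1 - 1)
          + ∑ j ∈ Finset.range p', aQ (j + 2) * Q ^ (p' + 1 - (j + 2)) :=
          hsplit (fun j => aQ j * Q ^ (p' + 1 - j))
      _ = Q ^ (p' + 1) + a1 * Q ^ p'
          + ∑ j ∈ Finset.range p', aQ (j + 2) * Q ^ (p' + 1 - (j + 2)) := by
          rw [haQ0, ← ha1Q, Nat.sub_zero, Nat.add_sub_cancel, one_mul]
      _ = _ := by
          rw [hQp, ha1Qp]
          linear_combination hmid
  -- the Good decomposition of P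
  have hGood : GoodAux τ a1 p' (p' * m) P := by
    rw [hP3]
    refine GoodAux.add ?_ (GoodAux.add ?_ (GoodAux.add ?_ ?_))
    · have := GoodAux.top (τ := τ) (a1 := a1) (e := p') (N := p' * m) ha1 1
      rwa [one_mul] at this
    · refine GoodAux.sum ha1 _ _ fun i hi => ?_
      rw [Finset.mem_range] at hi
      have hrw : (-B) ^ (i + 2) * τ ^ (p' + 1 - (i + 2)) * (((p' + 1).choose (i + 2) : ℕ) : Polynomial A)
          = ((-B) ^ (i + 2) * (((p' + 1).choose (i + 2) : ℕ) : Polynomial A)) * τ ^ (p' - 1 - i) := by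
        rw [(by omega : p' + 1 - (i + 2) = p' - 1 - i)]; ring
      rw [hrw]
      have hgt := good_term hτmonic hm' ha1 hdτ p' i (by omega)
        ((-B) ^ (i + 2) * (((p' + 1).choose (i + 2) : ℕ) : Polynomial A)) ?_
      · rwa [hτm] at hgt
      · apply degree_lt_nat
        rw [hτm]
        have h1 : ((-B) ^ (i + 2)).natDegree ≤ (i + 2) * B.natDegree := by
          have := natDegree_pow_le (p := -B) (n := i + 2)
          simpa [natDegree_neg] using this
        have h2 : B.natDegree ≤ d := by
          calc B.natDegree ≤ (Polynomial.C c).natDegree + a1.natDegree := natDegree_mul_le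
            _ = d := by rw [natDegree_C, zero_add]
        calc ((-B) ^ (i + 2) * (((p' + 1).choose (i + 2) : ℕ) : Polynomial A)).natDegree
            ≤ ((-B) ^ (i + 2)).natDegree + (((p' + 1).choose (i + 2) : ℕ) : Polynomial A).natDegree :=
              natDegree_mul_le
          _ = ((-B) ^ (i + 2)).natDegree := by rw [natDegree_natCast, add_zero]
          _ ≤ (i + 2) * d := le_trans h1 (Nat.mul_le_mul_left _ h2)
          _ < (i + 1) * m + d := by nlinarith [hdm]
    · refine GoodAux.sum ha1 _ _ fun i hi => ?_
      rw [Finset.mem_range] at hi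
      have hrw : a1 * ((-B) ^ (i + 1) * τ ^ (p' - (i + 1)) * ((p'.choose (i + 1) : ℕ) : Polynomial A))
          = (a1 * (-B) ^ (i + 1) * ((p'.choose (i + 1) : ℕ) : Polynomial A)) * τ ^ (p' - 1 - i) := by
        rw [(by omega : p' - (i + 1) = p' - 1 - i)]; ring
      rw [hrw]
      have hgt := good_term hτmonic hm' ha1 hdτ p' i (by omega)
        (a1 * (-B) ^ (i + 1) * ((p'.choose (i + 1) : ℕ) : Polynomial A)) ?_
      · rwa [hτm] at hgt
      · apply degree_lt_nat
        rw [hτm]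
        have h1 : ((-B) ^ (i + 1)).natDegree ≤ (i + 1) * B.natDegree := by
          have := natDegree_pow_le (p := -B) (n := i + 1)
          simpa [natDegree_neg] using this
        have h2 : B.natDegree ≤ d := by
          calc B.natDegree ≤ (Polynomial.C c).natDegree + a1.natDegree := natDegree_mul_le
            _ = d := by rw [natDegree_C, zero_add]
        calc (a1 * (-B) ^ (i + 1) * ((p'.choose (i + 1) : ℕ) : Polynomial A)).natDegree
            ≤ (a1 * (-B) ^ (i + 1)).natDegree + ((p'.choose (i + 1) : ℕ) : Polynomial A).natDegree :=
              natDegree_mul_le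
          _ = (a1 * (-B) ^ (i + 1)).natDegree := by rw [natDegree_natCast, add_zero]
          _ ≤ d + (i + 1) * d := by
              refine le_trans natDegree_mul_le ?_
              exact Nat.add_le_add le_rfl (le_trans h1 (Nat.mul_le_mul_left _ h2))
          _ < (i + 1) * m + d := by nlinarith [hdm]
    · refine GoodAux.ofR ha1 ?_
      refine lt_of_le_of_lt (degree_sum_le _ _)
        ((Finset.sup_lt_iff (bot_lt_natCast _)).2 fun j hj => ?_)
      rw [Finset.mem_range] at hj
      apply degree_lt_nat
      have h1 : (aQ (j + 2)).natDegree < m := by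
        rw [haQdef]
        exact natDegree_modByMonic_lt _ hQ hQ1
      calc (aQ (j + 2) * Q ^ (p' + 1 - (j + 2))).natDegree
          ≤ (aQ (j + 2)).natDegree + (Q ^ (p' + 1 - (j + 2))).natDegree := natDegree_mul_le
        _ = (aQ (j + 2)).natDegree + (p' - 1 - j) * m := by
            rw [hQ.natDegree_pow, ← hmdef, (by omega : p' + 1 - (j + 2) = p' - 1 - j)]
        _ < p' * m := by
            obtain ⟨q, hq⟩ : ∃ q, p' = q + j + 1 := ⟨p' - j - 1, by omega⟩
            have h2 : p' - 1 - j = q := by omega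
            rw [h2]
            subst hq
            nlinarith [h1, hm]
  -- τ-adic expansion of P and conclusion
  have hPdltτ : P.degree < (((p' + 1 + 1) * τ.natDegree : ℕ) : WithBot ℕ) := by
    rw [hτm]; exact hPdlt
  set aT : ℕ → Polynomial A := fun j => Ecoeff τ P (p' + 1 - j) with haTdef
  have hPT : P = ∑ j ∈ Finset.range (p' + 1 + 1), aT j * τ ^ (p' + 1 - j) := by
    rw [reflect_sum (p' + 1) aT τ]
    calc P = ∑ l ∈ Finset.range (p' + 1 + 1), Ecoeff τ P l * τ ^ l :=
          expand hτmonic hm' (p' + 1) P hPdltτ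
      _ = ∑ l ∈ Finset.range (p' + 1 + 1), aT (p' + 1 - l) * τ ^ l := by
          refine Finset.sum_congr rfl fun l hl => ?_
          rw [Finset.mem_range] at hl
          rw [haTdef]
          simp only
          rw [(by omega : p' + 1 - (p' + 1 - l) = l)]
  have hadicT : adicCoeff P τ 1 = aT 1 :=
    adicCoeff_eq hτmonic hm' aT (fun j => Ecoeff_degree_lt τ P hτmonic _)
      (by rw [hsτ]; exact hPT) 1 (by rw [hsτ]; omega)
  obtain ⟨H, g, R, hPg, hgdeg, hRdeg⟩ := hGood
  have hdiv : P /ₘ τ ^ p' = τ * H + g := by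
    refine (div_modByMonic_unique (τ * H + g) R (hτmonic.pow p') ⟨by rw [hPg]; ring, ?_⟩).1
    rw [degree_pow_monic hτmonic, hτm]
    exact hRdeg
  have haT1 : aT 1 = g := by
    have : aT 1 = Ecoeff τ P p' := by rw [haTdef]; simp only; rw [Nat.add_sub_cancel]
    rw [this, Ecoeff, hdiv, add_modByMonic, self_mul_modByMonic hτmonic,
      (modByMonic_eq_self_iff hτmonic).2 (lt_trans hgdeg (hd.trans_eq hτdegQ.symm)), zero_add]
  rw [hadicT, haT1]
  exact hgdeg
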